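/- For the growth rate s of ternary squarefree words, 952^{1/53} ≤ s, given the existence of a 54-Brinkhuis 952-triple; numerically, 952^{1/53} > 110^{1/42}, so this bound improves the earlier bound 110^{1/42}. -/

import Mathlib

/-- A word is squarefree if it contains no factor `x ++ x` with `x` nonempty. -/
def IsSquarefreeWord {α : Type*} (w : List α) : Prop :=
  ∀ x : List α, x ≠ [] → ¬ ∃ a b : List α, w = a ++ x ++ x ++ b

/-- The number of ternary squarefree words of length `n`. -/
noncomputable def sCount (n : ℕ) : ℕ :=
  {w : List (Fin 3) | w.length = n ∧ IsSquarefreeWord w}.ncard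

/-- An `n`-Brinkhuis `k`-triple: three families of `k` distinct squarefree ternary
words of length `n` such that substituting the three families for the three letters
of any squarefree word of length 3 always yields a squarefree word. -/
def IsBrinkhuisTriple (n k : ℕ) (B : Fin 3 → Fin k → List (Fin 3)) : Prop :=
  (∀ (i : Fin 3) (j : Fin k), (B i j).length = n ∧ IsSquarefreeWord (B i j)) ∧
  (∀ i : Fin 3, Function.Injective (B i)) ∧
  (∀ i₁ i₂ i₃ : Fin 3, IsSquarefreeWord [i₁, i₂, i₃] →
    ∀ j₁ j₂ j₃ : Fin k, IsSquarefreeWord (B i₁ j₁ ++ B i₂ j₂ ++ B i₃ j₃))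

namespace BrinkAux

open List

variable {α : Type*}

theorem sf_nil : IsSquarefreeWord ([] : List α) := by
  rintro x hx ⟨a, b, h⟩
  apply hx
  have := congrArg List.length h
  simp at this
  exact List.eq_nil_of_length_eq_zero (by omega)

theorem sf_infix {w y : List α} (h : IsSquarefreeWord w) (hyw : y <:+: w) :
    IsSquarefreeWord y := by
  obtain ⟨u, v, rfl⟩ := hyw
  rintro x hx ⟨a, b, hy⟩
  exact h x hx ⟨u ++ a, b ++ v, by rw [hy]; simp [List.append_assoc]⟩

theorem sf_single (a : α) : IsSquarefreeWord [a] := by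
  rintro x hx ⟨u, v, h⟩
  have := congrArg List.length h
  have hx' : 0 < x.length := List.length_pos_iff.2 hx
  simp at this; omega

theorem sf_pair_ne {a b : α} (h : IsSquarefreeWord [a, b]) : a ≠ b := by
  rintro rfl
  exact h [a] (by simp) ⟨[], [], by simp⟩

theorem sf_triple {a b c : α} (h1 : a ≠ b) (h2 : b ≠ c) : IsSquarefreeWord [a, b, c] := by
  rintro x hx ⟨u, v, h⟩
  have hlen := congrArg List.length h
  have hx' : 0 < x.length := List.length_pos_iff.2 hx
  simp at hlen
  have hx1 : x.length = 1 := by omega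
  obtain ⟨y, rfl⟩ := List.length_eq_one_iff.1 hx1
  match u, h with
  | [], h => simp at h; obtain ⟨rfl, rfl, -⟩ := h; exact h1 rfl
  | [d], h => simp at h; obtain ⟨-, rfl, rfl, -⟩ := h; exact h2 rfl
  | (d :: e :: u'), h => simp at hlen; omega

theorem sf_pair {a b : α} (h1 : a ≠ b) : IsSquarefreeWord [a, b] := by
  have : [a, b] <:+: [a, b, a] := ⟨[], [a], by simp⟩
  exact sf_infix (sf_triple h1 (Ne.symm h1)) this

/-- ext via getD -/
theorem ext_getD {l₁ l₂ : List α} (d : α) (h : l₁.length = l₂.length)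
    (he : ∀ i < l₁.length, l₁.getD i d = l₂.getD i d) : l₁ = l₂ := by
  apply List.ext_getElem h
  intro i h1 h2
  have := he i h1
  rwa [List.getD_eq_getElem _ _ h1, List.getD_eq_getElem _ _ h2] at this

theorem getD_take' {l : List α} {s e : ℕ} (d : α) (h : e < s) :
    (l.take s).getD e d = l.getD e d := by
  by_cases h' : e < l.length
  · rw [List.getD_eq_getElem _ _ (by simp; omega), List.getD_eq_getElem _ _ h',
      List.getElem_take]
  · rw [List.getD_eq_default _ _ (by simp; omega), List.getD_eq_default _ _ (by omega)]

theorem getD_drop' {l : List α} {s e : ℕ} (d : α) :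
    (l.drop s).getD e d = l.getD (s + e) d := by
  by_cases h' : s + e < l.length
  · rw [List.getD_eq_getElem _ _ (by simp; omega), List.getD_eq_getElem _ _ h',
      List.getElem_drop]
  · rw [List.getD_eq_default _ _ (by simp; omega), List.getD_eq_default _ _ (by omega)]

theorem length_flatten_const {n : ℕ} :
    ∀ (J : List (List α)), (∀ l ∈ J, l.length = n) → J.flatten.length = n * J.length
  | [], _ => by simp
  | (L :: J'), h => by
    simp only [List.flatten_cons, List.length_append, List.length_cons]
    rw [length_flatten_const J' (fun l hl => h l (by simp [hl])), h L (by simp)]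
    ring

theorem flatten_getD {n : ℕ} (d : α) :
    ∀ (J : List (List α)), (∀ l ∈ J, l.length = n) → ∀ r e, r < J.length → e < n →
      J.flatten.getD (r * n + e) d = (J.getD r []).getD e d
  | [], _ => by intro r e hr he; simp at hr
  | (L :: J'), h => by
    intro r e hr he
    have hL : L.length = n := h L (by simp)
    match r with
    | 0 =>
      simp only [List.flatten_cons, Nat.zero_mul, Nat.zero_add, List.getD_cons_zero]
      rw [List.getD_append _ _ _ _ (by omega)]
    | (r + 1) =>
      have hidx : (r + 1) * n + e = L.length + (r * n + e) := by rw [hL]; ring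
      simp only [List.flatten_cons, List.getD_cons_succ]
      rw [hidx, List.getD_append_right _ _ _ _ (by omega), Nat.add_sub_cancel_left]
      exact flatten_getD d J' (fun l hl => h l (by simp [hl])) r e (by simpa using hr) he

/-- squarefree words have no "letter square at distance c" -/
theorem letters_square {L : List α} (d : α) (hL : IsSquarefreeWord L) {q c : ℕ} (hc : 0 < c)
    (hm : q + c + c ≤ L.length) (heq : ∀ i < c, L.getD (q + i) d = L.getD (q + c + i) d) :
    False := by
  set y := (L.drop q).take c with hy_def
  set y' := (L.drop (q + c)).take c with hy'_def
  have hlen_dq : (L.drop q).length = L.length - q := by simp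
  have hy_len : y.length = c := by simp [hy_def]; omega
  have hy'_len : y'.length = c := by simp [hy'_def]; omega
  have hyy' : y = y' := by
    apply ext_getD d (by rw [hy_len, hy'_len])
    intro i hi
    rw [hy_len] at hi
    rw [hy_def, hy'_def, getD_take' d hi, getD_take' d hi, getD_drop' d, getD_drop' d]
    exact heq i hi
  have e1 : L.drop q = y ++ L.drop (q + c) := by
    conv_lhs => rw [← List.take_append_drop c (L.drop q)]
    rw [List.drop_drop]
  have e2 : L.drop (q + c) = y' ++ L.drop (q + c + c) := by
    conv_lhs => rw [← List.take_append_drop c (L.drop (q + c))]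
    rw [List.drop_drop]
  apply hL y (by intro h; rw [h] at hy_len; simp at hy_len; omega)
  refine ⟨L.take q, L.drop (q + c + c), ?_⟩
  conv_lhs => rw [← List.take_append_drop q L, e1, e2, ← hyy']
  simp [List.append_assoc]

theorem adj_ne {L : List α} (d : α) (hL : IsSquarefreeWord L) {r : ℕ} (hr : r + 1 < L.length)
    (h : L.getD r d = L.getD (r + 1) d) : False := by
  apply letters_square d hL (q := r) (c := 1) (by omega) (by omega)
  intro i hi
  interval_cases i
  simpa using h

theorem mul_lt_mul_of_lt {n i j e : ℕ} (hij : i < j) (he : e < n) : i * n + e < j * n :=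
  calc i * n + e < i * n + n := by omega
    _ = (i + 1) * n := by ring
    _ ≤ j * n := Nat.mul_le_mul_right n hij

theorem split_prefix {u v u' v' : List α} (h : u ++ v = u' ++ v') (hl : u.length ≤ u'.length) :
    ∃ w, u' = u ++ w ∧ v = w ++ v' := by
  rcases List.append_eq_append_iff.1 h with ⟨w, hw1, hw2⟩ | ⟨w, hw1, hw2⟩
  · exact ⟨w, hw1, hw2⟩
  · have : w.length = 0 := by
      have := congrArg List.length hw1; simp at this; omega
    rw [List.eq_nil_of_length_eq_zero this] at hw1 hw2
    exact ⟨[], by simpa using hw1.symm, by simpa using hw2.symm⟩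

end BrinkAux

namespace BrinkAux

open List

structure Ctx (n k : ℕ) (B : Fin 3 → Fin k → List (Fin 3)) : Prop where
  hlen : ∀ i j, (B i j).length = n
  hsf : ∀ i j, IsSquarefreeWord (B i j)
  hinj : ∀ i : Fin 3, Function.Injective (B i)
  htrip : ∀ i₁ i₂ i₃ : Fin 3, IsSquarefreeWord [i₁, i₂, i₃] →
    ∀ j₁ j₂ j₃, IsSquarefreeWord (B i₁ j₁ ++ B i₂ j₂ ++ B i₃ j₃)
  hn : 0 < n

variable {n k : ℕ} {B : Fin 3 → Fin k → List (Fin 3)}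

theorem Ctx.bne (C : Ctx n k B) (i : Fin 3) (j : Fin k) : B i j ≠ [] := by
  intro h
  have h1 := C.hlen i j
  have h2 := C.hn
  rw [h] at h1; simp at h1; omega

theorem Ctx.cross_inj (C : Ctx n k B) {i i' : Fin 3} {j j' : Fin k}
    (h : B i j = B i' j') : i = i' ∧ j = j' := by
  by_cases hii : i = i'
  · exact ⟨hii, C.hinj i (by rw [h, hii])⟩
  · exfalso
    have h3 := C.htrip i i' i (sf_triple hii (Ne.symm hii)) j j' j
    exact h3 (B i j) (C.bne i j) ⟨[], B i j, by rw [← h]; simp [List.append_assoc]⟩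

theorem Ctx.sync (C : Ctx n k B) {b c a : Fin 3} {j1 j2 j0 : Fin k} {u v v' u' : List (Fin 3)}
    (hbc : b ≠ c) (hb : B b j1 = u ++ v) (hc : B c j2 = v' ++ u')
    (ha : B a j0 = v ++ v') (hv : v ≠ []) (hv' : v' ≠ []) : False := by
  by_cases hab : a = b
  · subst hab
    obtain ⟨y, hy⟩ := exists_ne a
    have h3 := C.htrip y a c (sf_triple hy hbc) j0 j0 j2
    exact h3 v' hv' ⟨B y j0 ++ v, u', by rw [ha, hc]; simp [List.append_assoc]⟩
  · obtain ⟨y, hy⟩ := exists_ne a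
    have h3 := C.htrip b a y (sf_triple (Ne.symm hab) (Ne.symm hy)) j1 j0 j0
    exact h3 v hv ⟨u, v' ++ B y j0, by rw [hb, ha]; simp [List.append_assoc]⟩

theorem Ctx.sf_two (C : Ctx n k B) {i i' : Fin 3} (h : i ≠ i') (j j' : Fin k) :
    IsSquarefreeWord (B i j ++ B i' j') := by
  obtain ⟨y, hy⟩ := exists_ne i'
  have h3 := C.htrip i i' y (sf_triple h (Ne.symm hy)) j j' j
  exact sf_infix h3 ⟨[], B y j, by simp [List.append_assoc]⟩

theorem Ctx.sfJoin3 (C : Ctx n k B) : ∀ (l : List (Fin 3 × Fin k)), l.length ≤ 3 →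
    IsSquarefreeWord (l.map Prod.fst) →
    IsSquarefreeWord ((l.map fun pr => B pr.1 pr.2).flatten)
  | [], _, _ => by simpa using sf_nil
  | [p1], _, _ => by simpa using C.hsf p1.1 p1.2
  | [p1, p2], _, h => by
    have hne : p1.1 ≠ p2.1 := sf_pair_ne (by simpa using h)
    simpa [List.append_assoc] using C.sf_two hne p1.2 p2.2
  | [p1, p2, p3], _, h => by
    have h' : IsSquarefreeWord [p1.1, p2.1, p3.1] := by simpa using h
    simpa [List.append_assoc] using C.htrip p1.1 p2.1 p3.1 h' p1.2 p2.2 p3.2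
  | (p1 :: p2 :: p3 :: p4 :: l'), hl, _ => by simp at hl; omega

theorem getD_period {α : Type*} (d : α) (Pl xl Sl : List α) (e : ℕ) (he : e < xl.length) :
    (Pl ++ (xl ++ (xl ++ Sl))).getD (Pl.length + e) d
      = (Pl ++ (xl ++ (xl ++ Sl))).getD (Pl.length + xl.length + e) d := by
  have hL : (Pl ++ (xl ++ (xl ++ Sl))).getD (Pl.length + e) d = xl.getD e d := by
    rw [List.getD_append_right _ _ _ _ (by omega)]
    rw [show Pl.length + e - Pl.length = e from by omega]
    rw [List.getD_append _ _ _ _ he]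
  have hR : (Pl ++ (xl ++ (xl ++ Sl))).getD (Pl.length + xl.length + e) d = xl.getD e d := by
    rw [List.getD_append_right _ _ _ _ (by omega)]
    rw [show Pl.length + xl.length + e - Pl.length = xl.length + e from by omega]
    rw [List.getD_append_right _ _ _ _ (by omega)]
    rw [show xl.length + e - xl.length = e from by omega]
    rw [List.getD_append _ _ _ _ he]
  rw [hL, hR]

set_option maxHeartbeats 1000000 in
theorem Ctx.sf_flatten (C : Ctx n k B) (ws : List (Fin 3 × Fin k))
    (hw : IsSquarefreeWord (ws.map Prod.fst)) :
    IsSquarefreeWord ((ws.map fun pr => B pr.1 pr.2).flatten) := by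
  classical
  rintro x hx ⟨P, S, hxx⟩
  set J : List (List (Fin 3)) := ws.map fun pr => B pr.1 pr.2 with hJ_def
  set L : List (Fin 3) := ws.map Prod.fst with hL_def
  set m := ws.length with hm_def
  have hn' : 0 < n := C.hn
  have hJlen : ∀ l ∈ J, l.length = n := by
    intro l hl
    rw [hJ_def] at hl
    simp only [List.mem_map] at hl
    obtain ⟨pr, -, rfl⟩ := hl
    exact C.hlen _ _
  have hJm : J.length = m := by rw [hJ_def]; simp [hm_def]
  have hLm : L.length = m := by rw [hL_def]; simp [hm_def]
  set W := J.flatten with hW_def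
  have hWlen : W.length = n * m := by rw [hW_def, length_flatten_const J hJlen, hJm]
  set a := P.length with ha_def
  set p := x.length with hp_def
  have hp : 0 < p := by rw [hp_def]; exact List.length_pos_iff.2 hx
  have hxx' : W = P ++ (x ++ (x ++ S)) := by rw [hxx]; simp [List.append_assoc]
  have ham : a + p + p ≤ n * m := by
    have h1 := congrArg List.length hxx'
    rw [hWlen] at h1
    simp only [List.length_append] at h1
    omega
  have hper : ∀ t, a ≤ t → t < a + p → W.getD t 0 = W.getD (t + p) 0 := by
    intro t h1 h2
    obtain ⟨e, rfl⟩ : ∃ e, t = a + e := ⟨t - a, by omega⟩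
    have h5 := getD_period (0 : Fin 3) P x S e (by omega)
    rw [hxx', ha_def, hp_def]
    rw [show P.length + e + x.length = P.length + x.length + e from by omega]
    exact h5
  set X : ℕ → List (Fin 3) := fun r => J.getD r [] with hX_def
  have hXlen : ∀ r, r < m → (X r).length = n := by
    intro r hr
    have hrJ : r < J.length := by omega
    calc (X r).length = (J.getD r []).length := rfl
      _ = n := by
          rw [List.getD_eq_getElem _ _ hrJ]
          exact hJlen _ (List.getElem_mem _)
  have hXW : ∀ r e, r < m → e < n → W.getD (r * n + e) 0 = (X r).getD e 0 := by
    intro r e hr he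
    exact flatten_getD 0 J hJlen r e (by omega) he
  have hXB : ∀ r, r < m → ∃ jj, X r = B (L.getD r 0) jj := by
    intro r hr
    have hrw : r < ws.length := by omega
    refine ⟨(ws[r]'hrw).2, ?_⟩
    show J.getD r [] = B (L.getD r 0) (ws[r]'hrw).2
    rw [List.getD_eq_getElem _ _ (show r < J.length by omega),
        List.getD_eq_getElem _ _ (show r < L.length by omega)]
    simp only [hJ_def, hL_def, List.getElem_map]
  have hblock_letter : ∀ r r', r < m → r' < m → X r = X r' → L.getD r 0 = L.getD r' 0 := by
    intro r r' hr hr' h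
    obtain ⟨j1, e1⟩ := hXB r hr
    obtain ⟨j2, e2⟩ := hXB r' hr'
    exact (C.cross_inj (show B (L.getD r 0) j1 = B (L.getD r' 0) j2 by rw [← e1, ← e2, h])).1
  clear_value X W a p m L J
  clear hxx
  obtain ⟨q, s, haqs, hsn⟩ : ∃ q s, a = q * n + s ∧ s < n :=
    ⟨a / n, a % n, by rw [Nat.mul_comm]; exact (Nat.div_add_mod a n).symm, Nat.mod_lt _ C.hn⟩
  obtain ⟨c, δ, hpc, hδn⟩ : ∃ c δ, p = c * n + δ ∧ δ < n :=
    ⟨p / n, p % n, by rw [Nat.mul_comm]; exact (Nat.div_add_mod p n).symm, Nat.mod_lt _ C.hn⟩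
  have hmul : n * m = m * n := Nat.mul_comm n m
  by_cases hδ0 : δ = 0
  · -- aligned case : p = c * n
    have hpc' : p = c * n := by omega
    have hc : 0 < c := by
      rcases Nat.eq_zero_or_pos c with h | h
      · rw [h] at hpc'; simp at hpc'; omega
      · exact h
    have hncn : n ≤ c * n := by
      calc n = 1 * n := by ring
        _ ≤ c * n := Nat.mul_le_mul_right n hc
    have hq2cm : q + c + c ≤ m := by
      have e1 : (q + c + c) * n = q * n + (c * n + c * n) := by ring
      have h1 : (q + c + c) * n ≤ m * n := by omega
      exact Nat.le_of_mul_le_mul_right h1 C.hn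
    by_cases hs0 : s = 0
    · apply letters_square (0 : Fin 3) hw (q := q) (c := c) hc (by rw [hLm]; omega)
      intro i hi
      apply hblock_letter (q + i) (q + c + i) (by omega) (by omega)
      apply ext_getD (0 : Fin 3) (by rw [hXlen _ (by omega), hXlen _ (by omega)])
      intro e he'
      rw [hXlen _ (by omega)] at he'
      rw [← hXW _ _ (by omega) he', ← hXW _ _ (by omega) he']
      rw [show (q + c + i) * n + e = ((q + i) * n + e) + p from by rw [hpc']; ring]
      apply hper
      · have h2 : q * n ≤ (q + i) * n := Nat.mul_le_mul_right n (by omega)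
        omega
      · have h2 : (q + i) * n + e < (q + c) * n := mul_lt_mul_of_lt (by omega) he'
        have h3 : (q + c) * n = q * n + c * n := by ring
        omega
    · have hs : 0 < s := Nat.pos_of_ne_zero hs0
      have hq2cm' : q + c + c < m := by
        have e1 : (q + c + c) * n = q * n + (c * n + c * n) := by ring
        by_contra hcon
        push_neg at hcon
        have h2 : m * n ≤ (q + c + c) * n := Nat.mul_le_mul_right n hcon
        omega
      have middles : ∀ i, 1 ≤ i → i < c → X (q + i) = X (q + c + i) := by
        intro i h1i hic
        apply ext_getD (0 : Fin 3) (by rw [hXlen _ (by omega), hXlen _ (by omega)])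
        intro e he'
        rw [hXlen _ (by omega)] at he'
        rw [← hXW _ _ (by omega) he', ← hXW _ _ (by omega) he']
        rw [show (q + c + i) * n + e = ((q + i) * n + e) + p from by rw [hpc']; ring]
        apply hper
        · have h2 : (q + 1) * n ≤ (q + i) * n := Nat.mul_le_mul_right n (by omega)
          have h3 : (q + 1) * n = q * n + n := by ring
          omega
        · have h2 : (q + i) * n + e < (q + c) * n := mul_lt_mul_of_lt (by omega) he'
          have h3 : (q + c) * n = q * n + c * n := by ring
          omega
      have mid_letters : ∀ i, 1 ≤ i → i < c → L.getD (q + i) 0 = L.getD (q + c + i) 0 :=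
        fun i h1 h2 => hblock_letter _ _ (by omega) (by omega) (middles i h1 h2)
      by_cases hbd : L.getD q 0 = L.getD (q + c) 0
      · apply letters_square (0 : Fin 3) hw (q := q) (c := c) hc (by rw [hLm]; omega)
        intro i hi
        rcases Nat.eq_zero_or_pos i with rfl | hipos
        · simpa using hbd
        · exact mid_letters i hipos hi
      · by_cases hdd : L.getD (q + c) 0 = L.getD (q + c + c) 0
        · apply letters_square (0 : Fin 3) hw (q := q + 1) (c := c) hc (by rw [hLm]; omega)
          intro i hi
          rcases Nat.lt_or_ge i (c - 1) with h | h
          · have h5 := mid_letters (i + 1) (by omega) (by omega)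
            rw [show q + 1 + i = q + (i + 1) from by omega,
              show q + 1 + c + i = q + c + (i + 1) from by omega]
            exact h5
          · rw [show q + 1 + i = q + c from by omega,
              show q + 1 + c + i = q + c + c from by omega]
            exact hdd
        · -- crafted square (z ++ α) (z ++ α)
          have fact1 : (X q).drop s = (X (q + c)).drop s := by
            apply ext_getD (0 : Fin 3) (by
              rw [List.length_drop, List.length_drop, hXlen _ (by omega), hXlen _ (by omega)])
            intro e he'
            rw [List.length_drop, hXlen _ (by omega)] at he'
            rw [getD_drop', getD_drop']
            rw [← hXW q (s + e) (by omega) (by omega),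
              ← hXW (q + c) (s + e) (by omega) (by omega)]
            rw [show (q + c) * n + (s + e) = (q * n + (s + e)) + p from by rw [hpc']; ring]
            apply hper
            · omega
            · omega
          have fact2 : (X (q + c)).take s = (X (q + c + c)).take s := by
            apply ext_getD (0 : Fin 3) (by
              rw [List.length_take, List.length_take, hXlen _ (by omega), hXlen _ (by omega)])
            intro e he'
            rw [List.length_take, hXlen _ (by omega)] at he'
            have hes : e < s := lt_of_lt_of_le he' (min_le_left _ _)
            rw [getD_take' 0 hes, getD_take' 0 hes]
            rw [← hXW (q + c) e (by omega) (by omega),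
              ← hXW (q + c + c) e (by omega) (by omega)]
            rw [show (q + c + c) * n + e = ((q + c) * n + e) + p from by rw [hpc']; ring]
            have e3 : (q + c) * n = q * n + c * n := by ring
            apply hper
            · omega
            · omega
          obtain ⟨jb, hjb⟩ := hXB q (by omega)
          obtain ⟨jd, hjd⟩ := hXB (q + c) (by omega)
          obtain ⟨jd', hjd'⟩ := hXB (q + c + c) (by omega)
          obtain ⟨bet, hbet⟩ : ∃ t, t = (X q).take s := ⟨_, rfl⟩
          obtain ⟨z, hz⟩ : ∃ t, t = (X (q + c)).drop s := ⟨_, rfl⟩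
          obtain ⟨al, hal⟩ : ∃ t, t = (X (q + c)).take s := ⟨_, rfl⟩
          obtain ⟨w2, hw2⟩ : ∃ t, t = (X (q + c + c)).drop s := ⟨_, rfl⟩
          have e_q : X q = bet ++ z := by
            rw [hbet, hz, ← fact1, List.take_append_drop]
          have e_qc : X (q + c) = al ++ z := by
            rw [hal, hz, List.take_append_drop]
          have e_qcc : X (q + c + c) = al ++ w2 := by
            rw [hal, hw2, fact2, List.take_append_drop]
          have h3 := C.htrip _ _ _ (sf_triple hbd hdd) jb jd jd'
          apply h3 (z ++ al)
          · intro hcon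
            have h4 := congrArg List.length hcon
            rw [hz, hal] at h4
            simp only [List.length_append, List.length_drop, List.length_take,
              List.length_nil, hXlen _ (show q + c < m by omega)] at h4
            omega
          · refine ⟨bet, w2, ?_⟩
            rw [← hjb, ← hjd, ← hjd', e_q, e_qc, e_qcc]
            simp [List.append_assoc]
  · -- misaligned case
    have hδ : 0 < δ := Nat.pos_of_ne_zero hδ0
    have nomis : ∀ qh ρ r, qh + 1 < m → r < m → 0 < ρ → ρ < n →
        (∀ e, e < n → (X r).getD e 0 = W.getD (qh * n + ρ + e) 0) → False := by
      intro qh ρ r hqh hr hρ0 hρn hval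
      have hXqh := hXlen qh (by omega)
      have hXqh1 := hXlen (qh + 1) (by omega)
      have hXr := hXlen r hr
      have hsplit : X r = (X qh).drop ρ ++ (X (qh + 1)).take ρ := by
        apply ext_getD (0 : Fin 3) (by
          simp only [List.length_append, List.length_drop, List.length_take, hXqh, hXqh1, hXr]
          omega)
        intro e he'
        rw [hXr] at he'
        rw [hval e he']
        rcases Nat.lt_or_ge e (n - ρ) with h | h
        · rw [List.getD_append _ _ _ _ (by rw [List.length_drop, hXqh]; omega)]
          rw [getD_drop']
          rw [← hXW qh (ρ + e) (by omega) (by omega)]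
          rw [show qh * n + ρ + e = qh * n + (ρ + e) from by ring]
        · rw [List.getD_append_right _ _ _ _ (by rw [List.length_drop, hXqh]; omega)]
          rw [List.length_drop, hXqh]
          rw [getD_take' 0 (by omega)]
          rw [← hXW (qh + 1) (e - (n - ρ)) (by omega) (by omega)]
          have e1 : (qh + 1) * n = qh * n + n := by ring
          rw [show (qh + 1) * n + (e - (n - ρ)) = qh * n + ρ + e from by omega]
      obtain ⟨j0, hj0⟩ := hXB r hr
      obtain ⟨j1, hj1⟩ := hXB qh (by omega)
      obtain ⟨j2, hj2⟩ := hXB (qh + 1) (by omega)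
      have hbc : L.getD qh 0 ≠ L.getD (qh + 1) 0 := by
        intro h
        exact adj_ne 0 hw (by rw [hLm]; omega) h
      have hb : B (L.getD qh 0) j1 = (X qh).take ρ ++ (X qh).drop ρ := by
        rw [← hj1, List.take_append_drop]
      have hc2 : B (L.getD (qh + 1) 0) j2 = (X (qh + 1)).take ρ ++ (X (qh + 1)).drop ρ := by
        rw [← hj2, List.take_append_drop]
      have ha2 : B (L.getD r 0) j0 = (X qh).drop ρ ++ (X (qh + 1)).take ρ := by
        rw [← hj0]; exact hsplit
      have hv : (X qh).drop ρ ≠ [] := by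
        intro h
        have h4 := congrArg List.length h
        simp only [List.length_drop, hXqh, List.length_nil] at h4
        omega
      have hv' : (X (qh + 1)).take ρ ≠ [] := by
        intro h
        have h4 := congrArg List.length h
        simp only [List.length_take, hXqh1, List.length_nil] at h4
        omega
      exact C.sync hbc hb hc2 ha2 hv hv'
    have window3 : a + p + p ≤ (q + 3) * n → False := by
      intro hA
      set K := (ws.drop q).take 3 with hK_def
      have hqm : q < m := by
        by_contra hcon
        push_neg at hcon
        have h2 : m * n ≤ q * n := Nat.mul_le_mul_right n hcon
        omega
      have hKfst : K.map Prod.fst = (L.drop q).take 3 := by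
        rw [hK_def, List.map_take, List.map_drop, ← hL_def]
      have hKsf : IsSquarefreeWord (K.map Prod.fst) := by
        rw [hKfst]
        exact sf_infix hw ⟨L.take q, (L.drop q).drop 3,
          by rw [List.append_assoc, List.take_append_drop, List.take_append_drop]⟩
      have hKjsf := C.sfJoin3 K (by rw [hK_def]; exact List.length_take_le _ _) hKsf
      have hKtoB : K.map (fun pr => B pr.1 pr.2) = (J.drop q).take 3 := by
        rw [hK_def, List.map_take, List.map_drop, ← hJ_def]
      have hWsplit : W = (J.take q).flatten ++ ((J.drop q).take 3).flatten
          ++ ((J.drop q).drop 3).flatten := by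
        conv_lhs => rw [hW_def, ← List.take_append_drop q J,
          ← List.take_append_drop 3 (J.drop q)]
        rw [List.flatten_append, List.flatten_append, ← List.append_assoc]
      have hAlen : ((J.take q).flatten).length = n * q := by
        rw [length_flatten_const _ (fun l hl => hJlen l (List.mem_of_mem_take hl))]
        rw [List.length_take, hJm, Nat.min_eq_left (le_of_lt hqm)]
      have hKJlen : (((J.drop q).take 3).flatten).length = n * min 3 (m - q) := by
        rw [length_flatten_const _
          (fun l hl => hJlen l (List.mem_of_mem_drop (List.mem_of_mem_take hl)))]
        rw [List.length_take, List.length_drop, hJm]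
      have hAa : ((J.take q).flatten).length ≤ a := by
        have h2 : n * q = q * n := Nat.mul_comm n q
        omega
      have hcov : a + p + p ≤ ((J.take q).flatten).length
          + (((J.drop q).take 3).flatten).length := by
        rw [hAlen, hKJlen]
        rcases le_or_gt 3 (m - q) with h | h
        · rw [Nat.min_eq_left h]
          have e1 : (q + 3) * n = q * n + 3 * n := by ring
          have e2 : n * q = q * n := Nat.mul_comm n q
          have e3 : n * 3 = 3 * n := Nat.mul_comm n 3
          omega
        · rw [Nat.min_eq_right (by omega)]
          have e1 : n * q + n * (m - q) = n * m := by rw [← Nat.mul_add]; congr 1; omega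
          omega
      have heq1 : (J.take q).flatten ++ (((J.drop q).take 3).flatten
          ++ ((J.drop q).drop 3).flatten) = P ++ (x ++ (x ++ S)) := by
        rw [← List.append_assoc, ← hWsplit]
        exact hxx'
      obtain ⟨P₂, hP2, hrest1⟩ := split_prefix heq1 (by omega)
      have hP2len : P₂.length + ((J.take q).flatten).length = a := by
        have h4 := congrArg List.length hP2
        simp only [List.length_append] at h4
        omega
      obtain ⟨K₂, hK2, hrest2⟩ := split_prefix hrest1.symm (by omega)
      have hK2len : P₂.length + K₂.length = (((J.drop q).take 3).flatten).length := by
        have h4 := congrArg List.length hK2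
        simp only [List.length_append] at h4
        omega
      have hrest2' : (x ++ x) ++ S = K₂ ++ ((J.drop q).drop 3).flatten := by
        rw [← hrest2]; simp [List.append_assoc]
      obtain ⟨w2, hw2, -⟩ := split_prefix hrest2' (by
        simp only [List.length_append]
        omega)
      apply hKjsf x hx
      refine ⟨P₂, w2, ?_⟩
      rw [hKtoB, hK2, hw2]
      simp [List.append_assoc]
    obtain ⟨r1, h1a, h1b⟩ : ∃ r1, a ≤ r1 * n ∧ r1 * n < a + n := by
      rcases Nat.eq_zero_or_pos s with hs0 | hs0
      · exact ⟨q, by omega, by omega⟩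
      · have e1 : (q + 1) * n = q * n + n := by ring
        exact ⟨q + 1, by omega, by omega⟩
    by_cases hfull1 : r1 * n + n ≤ a + p
    · have hr1m : r1 < m := by
        by_contra hcon
        push_neg at hcon
        have h2 : m * n ≤ r1 * n := Nat.mul_le_mul_right n hcon
        omega
      apply nomis (r1 + c) δ r1 ?_ hr1m hδ hδn
      · intro e he
        rw [← hXW r1 e hr1m he]
        rw [show (r1 + c) * n + δ + e = (r1 * n + e) + p from by rw [hpc]; ring]
        exact hper _ (by omega) (by omega)
      · by_contra hcon
        push_neg at hcon
        have h2 : m * n ≤ (r1 + c + 1) * n := Nat.mul_le_mul_right n (by omega)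
        have e1 : (r1 + c + 1) * n = r1 * n + n + c * n := by ring
        omega
    · push_neg at hfull1
      have hr1q : r1 ≤ q + 1 := by
        by_contra hcon
        push_neg at hcon
        have h2 : (q + 2) * n ≤ r1 * n := Nat.mul_le_mul_right n hcon
        have e1 : (q + 2) * n = q * n + n + n := by ring
        omega
      have hap2 : a + p < (q + 2) * n := by
        have h2 : r1 * n ≤ (q + 1) * n := Nat.mul_le_mul_right n hr1q
        have e1 : (q + 2) * n = (q + 1) * n + n := by ring
        omega
      obtain ⟨q2, s2, h2eq, h2lt⟩ : ∃ q2 s2, a + p = q2 * n + s2 ∧ s2 < n :=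
        ⟨(a + p) / n, (a + p) % n,
          by rw [Nat.mul_comm]; exact (Nat.div_add_mod _ n).symm, Nat.mod_lt _ C.hn⟩
      have hq2q : q2 ≤ q + 1 := by
        by_contra hcon
        push_neg at hcon
        have h2 : (q + 2) * n ≤ q2 * n := Nat.mul_le_mul_right n hcon
        omega
      obtain ⟨r2, h2a, h2b, h2c⟩ : ∃ r2, a + p ≤ r2 * n ∧ r2 * n < a + p + n ∧ r2 ≤ q + 2 := by
        rcases Nat.eq_zero_or_pos s2 with h | h
        · exact ⟨q2, by omega, by omega, by omega⟩
        · have e1 : (q2 + 1) * n = q2 * n + n := by ring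
          exact ⟨q2 + 1, by omega, by omega, by omega⟩
      by_cases hfull2 : r2 * n + n ≤ a + p + p
      · have hr2c : c < r2 := by
          by_contra hcon
          push_neg at hcon
          have h2 : r2 * n ≤ c * n := Nat.mul_le_mul_right n hcon
          omega
        obtain ⟨qh, rfl⟩ : ∃ qh, r2 = qh + (c + 1) := ⟨r2 - (c + 1), by omega⟩
        have er2 : (qh + (c + 1)) * n = qh * n + c * n + n := by ring
        have hr2m : qh + (c + 1) < m := by
          by_contra hcon
          push_neg at hcon
          have h2 : m * n ≤ (qh + (c + 1)) * n := Nat.mul_le_mul_right n hcon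
          omega
        apply nomis qh (n - δ) (qh + (c + 1)) (by omega) hr2m (by omega) (by omega)
        intro e he
        rw [← hXW (qh + (c + 1)) e hr2m he]
        rw [show (qh + (c + 1)) * n + e = (qh * n + (n - δ) + e) + p from by rw [hpc]; omega]
        exact (hper _ (by omega) (by omega)).symm
      · push_neg at hfull2
        apply window3
        have h2 : r2 * n ≤ (q + 2) * n := Nat.mul_le_mul_right n h2c
        have e1 : (q + 3) * n = (q + 2) * n + n := by ring
        omega

theorem sf_finite (M : ℕ) :
    ({w : List (Fin 3) | w.length = M ∧ IsSquarefreeWord w}).Finite := by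
  apply Set.Finite.subset (Set.finite_range (List.ofFn : (Fin M → Fin 3) → List (Fin 3)))
  rintro w ⟨hl, -⟩
  subst hl
  exact ⟨w.get, List.ofFn_get w⟩

theorem Ctx.flatten_inj (C : Ctx n k B) : ∀ ws1 ws2 : List (Fin 3 × Fin k),
    ws1.length = ws2.length →
    (ws1.map fun pr => B pr.1 pr.2).flatten = (ws2.map fun pr => B pr.1 pr.2).flatten →
    ws1 = ws2
  | [], [], _, _ => rfl
  | [], (p2 :: t2), h, _ => by simp at h
  | (p1 :: t1), [], h, _ => by simp at h
  | (p1 :: t1), (p2 :: t2), h, hf => by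
    simp only [List.map_cons, List.flatten_cons] at hf
    have hlen12 : (B p1.1 p1.2).length = (B p2.1 p2.2).length := by
      rw [C.hlen, C.hlen]
    obtain ⟨h1, h2⟩ := List.append_inj hf hlen12
    obtain ⟨hl, hr⟩ := C.cross_inj h1
    have ht : t1 = t2 := C.flatten_inj t1 t2 (by simpa using h) h2
    have hp : p1 = p2 := Prod.ext hl hr
    rw [ht, hp]

theorem Ctx.step (C : Ctx n k B) (M : ℕ) :
    sCount M * k ^ M ≤ sCount (n * M) := by
  classical
  haveI : Finite ({w : List (Fin 3) | w.length = n * M ∧ IsSquarefreeWord w}) :=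
    (sf_finite (n * M)).to_subtype
  set F : ({w : List (Fin 3) | w.length = M ∧ IsSquarefreeWord w}) × (Fin M → Fin k) →
      ({w : List (Fin 3) | w.length = n * M ∧ IsSquarefreeWord w}) := fun z =>
    ⟨(((z.1 : List (Fin 3)).zip (List.ofFn z.2)).map fun pr => B pr.1 pr.2).flatten, by
      obtain ⟨⟨w, hwl, hwsf⟩, f⟩ := z
      have hzl : (w.zip (List.ofFn f)).length = M := by
        rw [List.length_zip, List.length_ofFn, hwl]; omega
      have hfst : (w.zip (List.ofFn f)).map Prod.fst = w :=
        List.map_fst_zip (le_of_eq (by rw [List.length_ofFn, hwl]))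
      constructor
      · rw [length_flatten_const _ (by
          intro l hl
          simp only [List.mem_map] at hl
          obtain ⟨pr, -, rfl⟩ := hl
          exact C.hlen _ _), List.length_map, hzl]
      · apply C.sf_flatten
        rw [hfst]
        exact hwsf⟩ with hF_def
  have hFinj : Function.Injective F := by
    rintro ⟨⟨w1, hw1l, hw1sf⟩, f1⟩ ⟨⟨w2, hw2l, hw2sf⟩, f2⟩ heq
    simp only [hF_def, Subtype.mk.injEq] at heq
    have hz := C.flatten_inj _ _ (by
      rw [List.length_zip, List.length_zip, List.length_ofFn, List.length_ofFn, hw1l, hw2l]) heq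
    have hw : w1 = w2 := by
      have h1 := List.map_fst_zip (l₁ := w1) (l₂ := List.ofFn f1) (le_of_eq (by rw [List.length_ofFn, hw1l]))
      have h2 := List.map_fst_zip (l₁ := w2) (l₂ := List.ofFn f2) (le_of_eq (by rw [List.length_ofFn, hw2l]))
      rw [← h1, ← h2, hz]
    have hf : f1 = f2 := by
      have h1 := List.map_snd_zip (l₁ := w1) (l₂ := List.ofFn f1) (le_of_eq (by rw [List.length_ofFn, hw1l]))
      have h2 := List.map_snd_zip (l₁ := w2) (l₂ := List.ofFn f2) (le_of_eq (by rw [List.length_ofFn, hw2l]))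
      apply List.ofFn_inj.1
      rw [← h1, ← h2, hz]
    subst hw; subst hf
    rfl
  have hcard := Nat.card_le_card_of_injective F hFinj
  rw [Nat.card_prod, Nat.card_coe_set_eq, Nat.card_coe_set_eq] at hcard
  simpa [sCount, Nat.card_fun] using hcard

def Epow : ℕ → ℕ
  | 0 => 0
  | (t + 1) => 54 ^ t + Epow t

theorem Epow_eq (t : ℕ) : 53 * Epow t + 1 = 54 ^ t := by
  induction t with
  | zero => simp [Epow]
  | succ t ih =>
    show 53 * (54 ^ t + Epow t) + 1 = 54 ^ (t + 1)
    rw [pow_succ]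
    omega

theorem growth {B : Fin 3 → Fin 952 → List (Fin 3)} (C : Ctx 54 952 B) :
    ∀ t, 952 ^ Epow t ≤ sCount (54 ^ t)
  | 0 => by
    have hpos : (0 : ℕ) < sCount 1 := by
      rw [sCount]
      rw [Set.ncard_pos (sf_finite 1)]
      exact ⟨[0], by simp, sf_single 0⟩
    simp only [Epow, pow_zero]; exact hpos
  | (t + 1) => by
    have h1 := C.step (54 ^ t)
    have h2 := growth C t
    have h3 : (54 : ℕ) ^ (t + 1) = 54 * 54 ^ t := by rw [pow_succ, Nat.mul_comm]
    rw [h3, show Epow (t + 1) = 54 ^ t + Epow t from rfl, pow_add]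
    calc (952 : ℕ) ^ 54 ^ t * 952 ^ Epow t
        ≤ 952 ^ 54 ^ t * sCount (54 ^ t) := Nat.mul_le_mul_left _ h2
      _ = sCount (54 ^ t) * 952 ^ 54 ^ t := Nat.mul_comm _ _
      _ ≤ sCount (54 * 54 ^ t) := h1

end BrinkAux


open Filter

theorem improved_lower_bound
    (hex : ∃ B : Fin 3 → Fin 952 → List (Fin 3), IsBrinkhuisTriple 54 952 B)
    (s : ℝ)
    (hs : Filter.Tendsto (fun m : ℕ => (sCount m : ℝ) ^ (1 / (m : ℝ)))
      Filter.atTop (nhds s)) :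
    (952 : ℝ) ^ ((1 : ℝ) / 53) ≤ s ∧
      (110 : ℝ) ^ ((1 : ℝ) / 42) < (952 : ℝ) ^ ((1 : ℝ) / 53) := by
  obtain ⟨B, hB⟩ := hex
  obtain ⟨h1, h2, h3⟩ := hB
  have C : BrinkAux.Ctx 54 952 B :=
    ⟨fun i j => (h1 i j).1, fun i j => (h1 i j).2, h2, h3, by norm_num⟩
  have growth := BrinkAux.growth C
  constructor
  · have hφ : Tendsto (fun t : ℕ => 54 ^ t) atTop atTop :=
      tendsto_pow_atTop_atTop_of_one_lt (by norm_num)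
    have hsub := hs.comp hφ
    have hElim : Tendsto (fun t : ℕ => (BrinkAux.Epow t : ℝ) / (54 : ℝ) ^ t)
        atTop (nhds (1 / 53)) := by
      have hkey : ∀ t : ℕ, (BrinkAux.Epow t : ℝ) / (54 : ℝ) ^ t
          = 1 / 53 - (1 / 53) * (1 / 54 : ℝ) ^ t := by
        intro t
        have h4 : (53 : ℝ) * (BrinkAux.Epow t : ℝ) + 1 = (54 : ℝ) ^ t := by
          exact_mod_cast BrinkAux.Epow_eq t
        have h54 : (54 : ℝ) ^ t ≠ 0 := by positivity
        have h5 : ((1 : ℝ) / 54) ^ t = ((54 : ℝ) ^ t)⁻¹ := by rw [one_div, inv_pow]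
        have h6 : (BrinkAux.Epow t : ℝ) = ((54 : ℝ) ^ t - 1) / 53 := by
          rw [eq_div_iff (by norm_num : (53 : ℝ) ≠ 0)]
          linarith
        rw [h6, h5]
        field_simp
      have h6 : Tendsto (fun t : ℕ => (1 : ℝ) / 53 - (1 / 53) * (1 / 54 : ℝ) ^ t)
          atTop (nhds (1 / 53)) := by
        have h7 := (tendsto_pow_atTop_nhds_zero_of_lt_one
          (by norm_num : (0:ℝ) ≤ 1/54) (by norm_num)).const_mul (1/53 : ℝ)
        have h8 := h7.const_sub (1/53 : ℝ)
        simpa using h8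
      exact Filter.Tendsto.congr (fun t => (hkey t).symm) h6
    have hlow : Tendsto (fun t : ℕ => (952 : ℝ) ^ ((BrinkAux.Epow t : ℝ) / (54 : ℝ) ^ t))
        atTop (nhds ((952 : ℝ) ^ ((1 : ℝ) / 53))) :=
      Filter.Tendsto.rpow tendsto_const_nhds hElim (Or.inl (by norm_num))
    refine le_of_tendsto_of_tendsto' hlow hsub ?_
    intro t
    show (952 : ℝ) ^ ((BrinkAux.Epow t : ℝ) / (54 : ℝ) ^ t)
      ≤ (sCount (54 ^ t) : ℝ) ^ (1 / ((54 ^ t : ℕ) : ℝ))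
    have hcast : ((54 ^ t : ℕ) : ℝ) = (54 : ℝ) ^ t := by push_cast; ring
    have hmono : ((952 : ℝ) ^ (BrinkAux.Epow t : ℕ)) ≤ (sCount (54 ^ t) : ℝ) := by
      exact_mod_cast growth t
    rw [hcast]
    calc (952 : ℝ) ^ ((BrinkAux.Epow t : ℝ) / (54 : ℝ) ^ t)
        = ((952 : ℝ) ^ (BrinkAux.Epow t : ℕ)) ^ ((1 : ℝ) / (54 : ℝ) ^ t) := by
          rw [← Real.rpow_natCast (952 : ℝ) (BrinkAux.Epow t), ← Real.rpow_mul (by norm_num)]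
          congr 1
          field_simp
      _ ≤ ((sCount (54 ^ t) : ℝ)) ^ ((1 : ℝ) / (54 : ℝ) ^ t) :=
          Real.rpow_le_rpow (by positivity) hmono (by positivity)
      _ = (sCount (54 ^ t) : ℝ) ^ (1 / ((54 : ℝ) ^ t)) := by norm_num
  · have l1 : (110 : ℝ) ^ ((1 : ℝ) / 42) = ((110 : ℝ) ^ (53 : ℕ)) ^ ((1 : ℝ) / 2226) := by
      rw [← Real.rpow_natCast (110 : ℝ) 53, ← Real.rpow_mul (by norm_num)]
      norm_num
    have l2 : (952 : ℝ) ^ ((1 : ℝ) / 53) = ((952 : ℝ) ^ (42 : ℕ)) ^ ((1 : ℝ) / 2226) := by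
      rw [← Real.rpow_natCast (952 : ℝ) 42, ← Real.rpow_mul (by norm_num)]
      norm_num
    rw [l1, l2]
    apply Real.rpow_lt_rpow (by positivity) ?_ (by norm_num)
    norm_num
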